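/- For real y with 0 < |y| < 1 and natural number n, ∫_ℝ |x|^n / (exp(x²/2) − y) dx = 2^{(n+1)/2} Γ((n+1)/2) Li_{(n+1)/2}(y) / y, where Li_s(y) = ∑_{k=1}^∞ y^k/k^s. -/

import Mathlib

open Real MeasureTheory

/-- The polylogarithm `Li_s(y) = ∑_{k=1}^∞ y^k / k^s`. -/
noncomputable def Li (s y : ℝ) : ℝ := ∑' k : ℕ, y ^ (k + 1) / ((k + 1 : ℕ) : ℝ) ^ s

lemma integrable_abs_pow_mul_exp_aux {c : ℝ} (hc : 0 < c) (n : ℕ) :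
    Integrable (fun x : ℝ => |x| ^ n * Real.exp (-(c * x ^ 2))) := by
  have h := (integrable_rpow_mul_exp_neg_mul_sq hc (s := n)
    (by exact_mod_cast neg_one_lt_zero.trans_le (Nat.cast_nonneg n))).abs
  refine h.congr ?_
  filter_upwards with x
  rw [abs_mul, Real.rpow_natCast, abs_pow, abs_of_pos (Real.exp_pos _), neg_mul]

lemma integral_abs_pow_mul_exp_aux {c : ℝ} (hc : 0 < c) (n : ℕ) :
    ∫ x : ℝ, |x| ^ n * Real.exp (-(c * x ^ 2)) =
      Real.Gamma (((n : ℝ) + 1) / 2) * (1 / c) ^ (((n : ℝ) + 1) / 2) := by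
  set s : ℝ := ((n : ℝ) + 1) / 2 with hs
  have hs0 : 0 < s := by positivity
  have h1 : (∫ x : ℝ, |x| ^ n * Real.exp (-(c * x ^ 2)))
      = 2 * ∫ x in Set.Ioi (0 : ℝ), x ^ n * Real.exp (-(c * x ^ 2)) := by
    rw [← integral_comp_abs (f := fun t => t ^ n * Real.exp (-(c * t ^ 2)))]
    congr 1; ext x; rw [sq_abs]
  have h3 : (∫ x in Set.Ioi (0 : ℝ),
        (|(2 : ℝ)| * x ^ ((2 : ℝ) - 1)) •
          ((x ^ (2 : ℝ)) ^ (s - 1) * Real.exp (-(c * x ^ (2 : ℝ)))))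
      = ∫ t in Set.Ioi (0 : ℝ), t ^ (s - 1) * Real.exp (-(c * t)) :=
    integral_comp_rpow_Ioi (fun t => t ^ (s - 1) * Real.exp (-(c * t))) two_ne_zero
  have h4 : (∫ x in Set.Ioi (0 : ℝ),
        (|(2 : ℝ)| * x ^ ((2 : ℝ) - 1)) •
          ((x ^ (2 : ℝ)) ^ (s - 1) * Real.exp (-(c * x ^ (2 : ℝ)))))
      = 2 * ∫ x in Set.Ioi (0 : ℝ), x ^ n * Real.exp (-(c * x ^ 2)) := by
    rw [← integral_const_mul]
    refine setIntegral_congr_fun measurableSet_Ioi fun x hx => ?_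
    have hx0 : (0 : ℝ) < x := hx
    have hx2 : x ^ (2 : ℝ) = x ^ 2 := by
      rw [← Real.rpow_natCast x 2]; norm_num
    rw [smul_eq_mul, hx2]
    have hxn : x ^ ((2 : ℝ) - 1) * (x ^ 2 : ℝ) ^ (s - 1) = x ^ n := by
      rw [← Real.rpow_two, ← Real.rpow_mul hx0.le,
        ← Real.rpow_add hx0, ← Real.rpow_natCast x n]
      congr 1
      rw [hs]; push_cast; ring
    calc |(2 : ℝ)| * x ^ ((2 : ℝ) - 1) * ((x ^ 2 : ℝ) ^ (s - 1) * Real.exp (-(c * x ^ 2)))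
        = 2 * (x ^ ((2 : ℝ) - 1) * (x ^ 2 : ℝ) ^ (s - 1) * Real.exp (-(c * x ^ 2))) := by
          rw [abs_two]; ring
      _ = 2 * (x ^ n * Real.exp (-(c * x ^ 2))) := by rw [hxn]
  rw [h1, ← h4, h3, integral_rpow_mul_exp_neg_mul_Ioi hs0 hc, mul_comm]

theorem integral_abs_pow_div_exp_sub (y : ℝ) (hy : 0 < |y|) (hy1 : |y| < 1) (n : ℕ) :
    ∫ x : ℝ, |x| ^ n / (Real.exp (x ^ 2 / 2) - y) =
      2 ^ (((n : ℝ) + 1) / 2) * Real.Gamma (((n : ℝ) + 1) / 2) *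
        Li (((n : ℝ) + 1) / 2) y / y := by
  have hy0 : y ≠ 0 := by
    intro h; rw [h] at hy; simp at hy
  set s : ℝ := ((n : ℝ) + 1) / 2 with hsdef
  have hs0 : 0 < s := by positivity
  set f : ℕ → ℝ → ℝ :=
    fun k x => y ^ k * (|x| ^ n * Real.exp (-((((k : ℝ) + 1) / 2) * x ^ 2))) with hf
  have hck : ∀ k : ℕ, (0 : ℝ) < ((k : ℝ) + 1) / 2 := fun k => by positivity
  -- pointwise series expansion
  have hpt : ∀ x : ℝ, |x| ^ n / (Real.exp (x ^ 2 / 2) - y) = ∑' k, f k x := by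
    intro x
    set t : ℝ := x ^ 2 / 2 with ht
    have ht0 : 0 ≤ t := by positivity
    have hE : (1 : ℝ) ≤ Real.exp t := Real.one_le_exp ht0
    have hr : ‖y * Real.exp (-t)‖ < 1 := by
      rw [Real.norm_eq_abs, abs_mul, abs_of_pos (Real.exp_pos _)]
      calc |y| * Real.exp (-t) ≤ |y| * 1 := by
            exact mul_le_mul_of_nonneg_left (Real.exp_le_one_iff.mpr (by linarith)) (abs_nonneg _)
        _ < 1 := by rw [mul_one]; exact hy1
    have hterm : ∀ k : ℕ, f k x =
        |x| ^ n * Real.exp (-t) * (y * Real.exp (-t)) ^ k := by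
      intro k
      have hpow : (y * Real.exp (-t)) ^ k = y ^ k * Real.exp ((k : ℝ) * -t) := by
        rw [mul_pow, ← Real.exp_nat_mul]
      rw [hpow, hf]
      simp only
      rw [show -((((k : ℝ) + 1) / 2) * x ^ 2) = -t + (k : ℝ) * -t from by rw [ht]; ring,
        Real.exp_add]
      ring
    rw [tsum_congr hterm, tsum_mul_left, tsum_geometric_of_norm_lt_one hr]
    have hEy : Real.exp t - y ≠ 0 := by
      have : y < 1 := lt_of_abs_lt hy1
      nlinarith
    rw [Real.exp_neg]
    have hE0 : Real.exp t ≠ 0 := (Real.exp_pos t).ne'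
    field_simp
  have hint : ∀ k, Integrable (f k) :=
    fun k => (integrable_abs_pow_mul_exp_aux (hck k) n).const_mul _
  have hval : ∀ k : ℕ, ∫ x, f k x =
      y ^ k * (Real.Gamma s * (2 / ((k : ℝ) + 1)) ^ s) := by
    intro k
    rw [hf]
    simp only
    rw [integral_const_mul, integral_abs_pow_mul_exp_aux (hck k) n, ← hsdef,
      one_div_div]
  -- swap integral and sum
  have hmeas : ∀ k, AEStronglyMeasurable (f k) volume := fun k => (hint k).1
  have hbound : ∀ k : ℕ, (∫ x, ‖f k x‖) ≤ |y| ^ k * (Real.Gamma s * 2 ^ s) := by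
    intro k
    have heq : (fun x => ‖f k x‖) =
        fun x => |y| ^ k * (|x| ^ n * Real.exp (-((((k : ℝ) + 1) / 2) * x ^ 2))) := by
      ext x
      rw [hf, Real.norm_eq_abs, abs_mul, abs_pow, abs_mul, abs_pow, abs_abs,
        abs_of_pos (Real.exp_pos _)]
    rw [heq, integral_const_mul, integral_abs_pow_mul_exp_aux (hck k) n, ← hsdef,
      one_div_div]
    have h2 : (2 / ((k : ℝ) + 1)) ^ s ≤ 2 ^ s := by
      apply Real.rpow_le_rpow (by positivity) _ hs0.le
      rw [div_le_iff₀ (by positivity)]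
      nlinarith [Nat.cast_nonneg (α := ℝ) k]
    have h3 := mul_le_mul_of_nonneg_left h2 (Real.Gamma_pos_of_pos hs0).le
    exact mul_le_mul_of_nonneg_left h3 (pow_nonneg (abs_nonneg _) _)
  have hsum : Summable (fun k : ℕ => |y| ^ k * (Real.Gamma s * 2 ^ s)) :=
    (summable_geometric_of_lt_one (abs_nonneg _) hy1).mul_right _
  have hswap : ∫ x : ℝ, ∑' k, f k x = ∑' k, ∫ x, f k x := by
    apply integral_tsum hmeas
    have hlin : ∀ k : ℕ, (∫⁻ x : ℝ, ‖f k x‖ₑ) =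
        ENNReal.ofReal (∫ x, ‖f k x‖) :=
      fun k => (ofReal_integral_norm_eq_lintegral_enorm (hint k)).symm
    rw [tsum_congr hlin]
    have hle : (∑' k : ℕ, ENNReal.ofReal (∫ x, ‖f k x‖)) ≤
        ∑' k : ℕ, ENNReal.ofReal (|y| ^ k * (Real.Gamma s * 2 ^ s)) :=
      ENNReal.tsum_le_tsum fun k => ENNReal.ofReal_le_ofReal (hbound k)
    refine ne_of_lt (lt_of_le_of_lt hle ?_)
    rw [← ENNReal.ofReal_tsum_of_nonneg (fun k => by positivity) hsum]
    exact ENNReal.ofReal_lt_top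
  -- final computation
  have hLi : Li s y = y * ∑' k : ℕ, y ^ k / ((k : ℝ) + 1) ^ s := by
    rw [Li, ← tsum_mul_left]
    refine tsum_congr fun k => ?_
    push_cast
    rw [pow_succ]
    ring
  calc ∫ x : ℝ, |x| ^ n / (Real.exp (x ^ 2 / 2) - y)
      = ∫ x : ℝ, ∑' k, f k x := integral_congr_ae (Filter.Eventually.of_forall hpt)
    _ = ∑' k, ∫ x, f k x := hswap
    _ = ∑' k : ℕ, (2 ^ s * Real.Gamma s) * (y ^ k / ((k : ℝ) + 1) ^ s) := by
        refine tsum_congr fun k => ?_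
        rw [hval k, Real.div_rpow (by norm_num) (by positivity)]
        ring
    _ = (2 ^ s * Real.Gamma s) * ∑' k : ℕ, y ^ k / ((k : ℝ) + 1) ^ s :=
        tsum_mul_left
    _ = 2 ^ s * Real.Gamma s * Li s y / y := by
        rw [hLi]
        field_simp
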